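/- arXiv:2409.19561 — 2 statements merged into one kernel-verified Lean document; each statement's English description precedes it below -/
import Mathlib

section
/- Fix real constants c and y, and for α ∈ (0,1] define g_α(β) = e^{c(α+β)}(e^{c(α+β)} − y) for 0 < β < 1 − α and g_α(β) = e^{c}(e^{c} − y) for 1 − α ≤ β ≤ 1. Define f(α) = (∫₀¹ g_α(β)g₁(β) dβ) / (√(∫₀¹ g_α(β)² dβ)·√(∫₀¹ g₁(β)² dβ)). Assume e^{c}(e^{c} − y) ≠ 0. Then there exists a constant K and δ > 0 such that |1 − f(α)²| ≤ K·(1 − α)³ for all α ∈ (1 − δ, 1]; that is, f(α)² = 1 + O((1 − α)³) as α → 1. -/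
noncomputable def gfun (c y : ℝ) (α : ℝ) (β : ℝ) : ℝ :=
  if β < 1 - α then Real.exp (c * (α + β)) * (Real.exp (c * (α + β)) - y)
  else Real.exp c * (Real.exp c - y)

noncomputable def ffun (c y : ℝ) (α : ℝ) : ℝ :=
  (∫ β in (0:ℝ)..1, gfun c y α β * gfun c y 1 β) /
    (Real.sqrt (∫ β in (0:ℝ)..1, (gfun c y α β) ^ 2) *
      Real.sqrt (∫ β in (0:ℝ)..1, (gfun c y 1 β) ^ 2))

lemma exp_lip (x z : ℝ) : |Real.exp x - Real.exp z| ≤ Real.exp (max x z) * |x - z| := by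
  wlog hxz : z ≤ x generalizing x z
  · rw [abs_sub_comm, max_comm, abs_sub_comm x z]
    exact this _ _ (le_of_not_ge hxz)
  have h1 := Real.add_one_le_exp (z - x)
  have h2 : Real.exp z = Real.exp x * Real.exp (z - x) := by
    rw [← Real.exp_add]; ring_nf
  have hx := Real.exp_pos x
  have hle : Real.exp z ≤ Real.exp x := Real.exp_le_exp.2 hxz
  rw [abs_of_nonneg (by linarith), abs_of_nonneg (by linarith), max_eq_left hxz]
  nlinarith

theorem ffun_sq_one_sub_cubic (c y : ℝ) (h : Real.exp c * (Real.exp c - y) ≠ 0) :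
    ∃ K δ : ℝ, 0 < δ ∧ ∀ α ∈ Set.Ioc (1 - δ) 1,
      |1 - (ffun c y α) ^ 2| ≤ K * (1 - α) ^ 3 := by
  set E := Real.exp c * (Real.exp c - y) with hEdef
  set L : ℝ := Real.exp |c| * |c| * (2 * Real.exp |c| + |y|) with hLdef
  have hL0 : 0 ≤ L := by positivity
  have hE2 : 0 < E ^ 2 := by positivity
  clear_value E L
  refine ⟨4 * L ^ 2 / E ^ 2, 1/2, by norm_num, ?_⟩
  intro α hα
  obtain ⟨hα1, hα2⟩ := hα
  set ε := 1 - α with hεdef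
  have hε0 : 0 ≤ ε := by simp only [hεdef]; linarith
  have hεh : ε ≤ 1/2 := by simp only [hεdef]; linarith
  have hε1 : ε ≤ 1 := by linarith
  clear_value ε
  -- the continuous extension on [0, ε]
  set H : ℝ → ℝ := fun β => Real.exp (c * (α + β)) * (Real.exp (c * (α + β)) - y)
    with hHdef
  have hHcont : Continuous H := by fun_prop
  -- g₁ is the constant E on [0,1]
  have hg1 : ∀ β ∈ Set.uIcc (0:ℝ) 1, gfun c y 1 β = E := by
    intro β hβ
    rw [Set.uIcc_of_le (by norm_num)] at hβ
    have hc : ¬ β < 1 - 1 := by push_neg; linarith [hβ.1]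
    simp only [gfun, if_neg hc]
    exact hEdef.symm
  -- g_α agrees with H on [0, ε] and with E on [ε, 1]
  have hgH : Set.EqOn (gfun c y α) H (Set.Icc 0 ε) := by
    intro β hβ
    by_cases hb : β < 1 - α
    · simp [gfun, hb, hHdef]
    · have hβε : β = ε := le_antisymm hβ.2 (by simpa [hεdef] using not_lt.mp hb)
      have hab : α + β = 1 := by rw [hβε, hεdef]; ring
      simp [gfun, hb, hHdef, hab]
  have hgE : Set.EqOn (gfun c y α) (fun _ => E) (Set.Icc ε 1) := by
    intro β hβ
    have hc : ¬ β < 1 - α := not_lt.2 (by rw [← hεdef] at *; linarith [hβ.1])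
    show gfun c y α β = E
    simp only [gfun, if_neg hc]
    exact hEdef.symm
  -- continuity / integrability of g_α on the two pieces
  have hcg1 : ContinuousOn (gfun c y α) (Set.Icc 0 ε) := hHcont.continuousOn.congr hgH
  have hcg2 : ContinuousOn (gfun c y α) (Set.Icc ε 1) := continuousOn_const.congr hgE
  have hi1 : IntervalIntegrable (gfun c y α) MeasureTheory.volume 0 ε :=
    (by rwa [Set.uIcc_of_le hε0] : ContinuousOn (gfun c y α) (Set.uIcc 0 ε)).intervalIntegrable
  have hi2 : IntervalIntegrable (gfun c y α) MeasureTheory.volume ε 1 :=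
    (by rwa [Set.uIcc_of_le hε1] : ContinuousOn (gfun c y α) (Set.uIcc ε 1)).intervalIntegrable
  have hisq1 : IntervalIntegrable (fun β => gfun c y α β ^ 2) MeasureTheory.volume 0 ε :=
    (by rw [Set.uIcc_of_le hε0]; exact hcg1.pow 2 :
      ContinuousOn (fun β => gfun c y α β ^ 2) (Set.uIcc 0 ε)).intervalIntegrable
  have hisq2 : IntervalIntegrable (fun β => gfun c y α β ^ 2) MeasureTheory.volume ε 1 :=
    (by rw [Set.uIcc_of_le hε1]; exact hcg2.pow 2 :
      ContinuousOn (fun β => gfun c y α β ^ 2) (Set.uIcc ε 1)).intervalIntegrable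
  -- main integrals
  set A := ∫ β in (0:ℝ)..1, gfun c y α β with hAdef
  set B := ∫ β in (0:ℝ)..1, gfun c y α β ^ 2 with hBdef
  set a := ∫ β in (0:ℝ)..ε, (H β - E) with hadef
  set b := ∫ β in (0:ℝ)..ε, (H β - E) ^ 2 with hbdef
  clear_value A B a b
  -- key pointwise bound on [0, ε]
  have key : ∀ β ∈ Set.uIoc (0:ℝ) ε, |H β - E| ≤ L * ε := by
    intro β hβ
    rw [Set.uIoc_of_le hε0] at hβ
    obtain ⟨hβ1, hβ2⟩ := hβ
    set s := α + β with hsdef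
    have hs0 : 0 ≤ s := by simp only [hsdef]; linarith
    have hs1 : s ≤ 1 := by simp only [hsdef, hεdef] at *; linarith
    have h1s : 1 - s ≤ ε := by simp only [hsdef, hεdef] at *; linarith
    set u := Real.exp (c * s) with hudef
    set v := Real.exp c with hvdef
    have habs_s : |s| ≤ 1 := by rw [abs_of_nonneg hs0]; exact hs1
    have hu : |u - v| ≤ Real.exp |c| * (|c| * ε) := by
      refine le_trans (exp_lip _ _) ?_
      have hmax : max (c * s) c ≤ |c| := by
        apply max_le
        · calc c * s ≤ |c * s| := le_abs_self _
            _ = |c| * |s| := abs_mul _ _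
            _ ≤ |c| * 1 := by nlinarith [abs_nonneg c]
            _ = |c| := mul_one _
        · exact le_abs_self c
      have habs : |c * s - c| ≤ |c| * ε := by
        have hrw : c * s - c = c * (s - 1) := by ring
        rw [hrw, abs_mul]
        have hrw2 : |s - 1| = 1 - s := by rw [abs_of_nonpos (by linarith)]; ring
        rw [hrw2]
        nlinarith [abs_nonneg c]
      exact mul_le_mul (Real.exp_le_exp.2 hmax) habs (abs_nonneg _) (Real.exp_pos _).le
    have hub : u ≤ Real.exp |c| := by
      apply Real.exp_le_exp.2
      calc c * s ≤ |c * s| := le_abs_self _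
        _ = |c| * |s| := abs_mul _ _
        _ ≤ |c| * 1 := by nlinarith [abs_nonneg c]
        _ = |c| := mul_one _
    have hvb : v ≤ Real.exp |c| := Real.exp_le_exp.2 (le_abs_self c)
    have hup : 0 < u := Real.exp_pos _
    have hvp : 0 < v := Real.exp_pos _
    have hHE : H β - E = (u - v) * (u + v) - y * (u - v) := by
      simp only [hHdef, hEdef, hudef, hvdef, ← hsdef]; ring
    have e1 : |(u - v) * (u + v) - y * (u - v)| ≤ |u - v| * |u + v| + |y| * |u - v| := by
      refine le_trans (abs_sub _ _) ?_
      rw [abs_mul, abs_mul]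
    have e2 : |u + v| ≤ 2 * Real.exp |c| := by
      rw [abs_of_pos (by linarith)]; linarith
    have t1 : |u - v| * |u + v| ≤ (Real.exp |c| * (|c| * ε)) * (2 * Real.exp |c|) :=
      mul_le_mul hu e2 (abs_nonneg _) (by positivity)
    have t2 : |y| * |u - v| ≤ |y| * (Real.exp |c| * (|c| * ε)) :=
      mul_le_mul_of_nonneg_left hu (abs_nonneg y)
    have hLε : (Real.exp |c| * (|c| * ε)) * (2 * Real.exp |c|)
        + |y| * (Real.exp |c| * (|c| * ε)) = L * ε := by rw [hLdef]; ring
    rw [hHE]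
    linarith [e1, t1, t2]
  -- bounds on a and b
  have ha : |a| ≤ L * ε * ε := by
    have hnb := intervalIntegral.norm_integral_le_of_norm_le_const
      (f := fun β => H β - E) (C := L * ε) (a := 0) (b := ε) (by
        intro x hx; rw [Real.norm_eq_abs]; exact key x hx)
    rw [hadef]
    calc |∫ β in (0:ℝ)..ε, (H β - E)| ≤ L * ε * |ε - 0| := hnb
      _ = L * ε * ε := by rw [sub_zero, abs_of_nonneg hε0]
  have hb : |b| ≤ L * ε * (L * ε) * ε := by
    have hnb := intervalIntegral.norm_integral_le_of_norm_le_const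
      (f := fun β => (H β - E) ^ 2) (C := L * ε * (L * ε)) (a := 0) (b := ε) (by
        intro x hx
        show ‖(H x - E) ^ 2‖ ≤ L * ε * (L * ε)
        rw [Real.norm_eq_abs, abs_of_nonneg (sq_nonneg _), sq]
        have hk := key x hx
        nlinarith [abs_nonneg (H x - E), abs_le.mp hk])
    rw [hbdef]
    calc |∫ β in (0:ℝ)..ε, (H β - E) ^ 2| ≤ L * ε * (L * ε) * |ε - 0| := hnb
      _ = L * ε * (L * ε) * ε := by rw [sub_zero, abs_of_nonneg hε0]
  have hb0 : 0 ≤ b := hbdef ▸ intervalIntegral.integral_nonneg hε0 (fun x _ => sq_nonneg _)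
  -- compute A
  have hintHE : IntervalIntegrable (fun β => H β - E) MeasureTheory.volume 0 ε :=
    ((hHcont.sub continuous_const).intervalIntegrable _ _)
  have hA : A = a + E := by
    rw [hAdef, ← intervalIntegral.integral_add_adjacent_intervals hi1 hi2]
    have e1 : ∫ β in (0:ℝ)..ε, gfun c y α β = ∫ β in (0:ℝ)..ε, H β :=
      intervalIntegral.integral_congr (by rwa [Set.uIcc_of_le hε0])
    have e2 : ∫ β in ε..1, gfun c y α β = (1 - ε) * E := by
      rw [intervalIntegral.integral_congr (g := fun _ => E) (by rwa [Set.uIcc_of_le hε1]),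
        intervalIntegral.integral_const, smul_eq_mul]
    have e3 : ∫ β in (0:ℝ)..ε, H β = a + ε * E := by
      have hrw : ∀ β, H β = (H β - E) + E := fun β => by ring
      rw [intervalIntegral.integral_congr (g := fun β => (H β - E) + E)
        (fun β _ => hrw β),
        intervalIntegral.integral_add hintHE (intervalIntegrable_const),
        intervalIntegral.integral_const, smul_eq_mul, ← hadef, sub_zero]
    rw [e1, e2, e3]; ring
  -- compute B
  have hB : B = b + 2 * E * a + E ^ 2 := by
    rw [hBdef, ← intervalIntegral.integral_add_adjacent_intervals hisq1 hisq2]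
    have e1 : ∫ β in (0:ℝ)..ε, gfun c y α β ^ 2 = ∫ β in (0:ℝ)..ε, H β ^ 2 :=
      intervalIntegral.integral_congr (by
        rw [Set.uIcc_of_le hε0]; intro β hβ; simp only [hgH hβ])
    have e2 : ∫ β in ε..1, gfun c y α β ^ 2 = (1 - ε) * E ^ 2 := by
      rw [intervalIntegral.integral_congr (g := fun _ => E ^ 2) (by
          rw [Set.uIcc_of_le hε1]; intro β hβ; simp only [hgE hβ]),
        intervalIntegral.integral_const, smul_eq_mul]
    have e3 : ∫ β in (0:ℝ)..ε, H β ^ 2 = b + 2 * E * a + ε * E ^ 2 := by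
      have hrw : ∀ β, H β ^ 2 = (H β - E) ^ 2 + (2 * E) * (H β - E) + E ^ 2 :=
        fun β => by ring
      rw [intervalIntegral.integral_congr
          (g := fun β => (H β - E) ^ 2 + (2 * E) * (H β - E) + E ^ 2)
          (fun β _ => hrw β),
        intervalIntegral.integral_add (f := fun β => (H β - E) ^ 2 + (2 * E) * (H β - E))
          (g := fun _ => E ^ 2) ((((hHcont.sub continuous_const).pow 2).intervalIntegrable _ _).add
          ((continuous_const.mul (hHcont.sub continuous_const)).intervalIntegrable _ _))
          intervalIntegrable_const,
        intervalIntegral.integral_add (f := fun β => (H β - E) ^ 2)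
          (g := fun β => (2 * E) * (H β - E)) (((hHcont.sub continuous_const).pow 2).intervalIntegrable _ _)
          ((continuous_const.mul (hHcont.sub continuous_const)).intervalIntegrable _ _),
        intervalIntegral.integral_const_mul, intervalIntegral.integral_const, smul_eq_mul,
        sub_zero, ← hadef, ← hbdef]
    rw [e1, e2, e3]; ring
  -- B is bounded below
  have hBge : E ^ 2 / 2 ≤ B := by
    have h1 : 0 ≤ ∫ β in (0:ℝ)..ε, H β ^ 2 :=
      intervalIntegral.integral_nonneg hε0 (fun x _ => sq_nonneg _)
    have e1 : B = (∫ β in (0:ℝ)..ε, H β ^ 2) + (1 - ε) * E ^ 2 := by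
      rw [hBdef, ← intervalIntegral.integral_add_adjacent_intervals hisq1 hisq2]
      congr 1
      · exact intervalIntegral.integral_congr (by
          rw [Set.uIcc_of_le hε0]; intro β hβ; simp only [hgH hβ])
      · rw [intervalIntegral.integral_congr (g := fun _ => E ^ 2) (by
            rw [Set.uIcc_of_le hε1]; intro β hβ; simp only [hgE hβ]),
          intervalIntegral.integral_const, smul_eq_mul]
    have h2 : (1/2 : ℝ) * E ^ 2 ≤ (1 - ε) * E ^ 2 :=
      mul_le_mul_of_nonneg_right (by linarith) hE2.le
    rw [e1]; linarith
  have hBpos : 0 < B := lt_of_lt_of_le (by positivity) hBge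
  -- compute ffun
  have hg1sq : (∫ β in (0:ℝ)..1, gfun c y 1 β ^ 2) = E ^ 2 := by
    rw [intervalIntegral.integral_congr (g := fun _ => E ^ 2)
        (fun β hβ => by simp only [hg1 β hβ]),
      intervalIntegral.integral_const, smul_eq_mul]; ring
  have hgg1 : (∫ β in (0:ℝ)..1, gfun c y α β * gfun c y 1 β) = A * E := by
    rw [intervalIntegral.integral_congr (g := fun β => gfun c y α β * E)
        (fun β hβ => by simp only [hg1 β hβ]),
      intervalIntegral.integral_mul_const, ← hAdef]
  have hffun : ffun c y α = (A * E) / (Real.sqrt B * |E|) := by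
    rw [ffun, hgg1, hg1sq, Real.sqrt_sq_eq_abs, ← hBdef]
  have hfsq : ffun c y α ^ 2 = A ^ 2 / B := by
    have hs : (Real.sqrt B * |E|) ^ 2 = B * E ^ 2 := by
      rw [mul_pow, Real.sq_sqrt hBpos.le, sq_abs]
    rw [hffun, div_pow, hs, mul_pow, mul_div_mul_right _ _ (pow_ne_zero 2 h)]
  -- final estimate
  rw [hfsq, one_sub_div (ne_of_gt hBpos)]
  have hnum : |B - A ^ 2| ≤ 2 * L ^ 2 * ε ^ 3 := by
    have hrw : B - A ^ 2 = b - a ^ 2 := by rw [hA, hB]; ring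
    rw [hrw]
    have ha2 : a ^ 2 ≤ L ^ 2 * ε ^ 4 := by
      calc a ^ 2 = |a| ^ 2 := (sq_abs a).symm
        _ ≤ (L * ε * ε) ^ 2 := pow_le_pow_left₀ (abs_nonneg a) ha 2
        _ = L ^ 2 * ε ^ 4 := by ring
    have hb2 : b ≤ L ^ 2 * ε ^ 3 :=
      le_trans (le_abs_self b) (le_of_le_of_eq hb (by ring))
    have hε4 : ε ^ 4 ≤ ε ^ 3 := pow_le_pow_of_le_one hε0 hε1 (by norm_num)
    have hε4' : L ^ 2 * ε ^ 4 ≤ L ^ 2 * ε ^ 3 :=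
      mul_le_mul_of_nonneg_left hε4 (sq_nonneg L)
    calc |b - a ^ 2| ≤ |b| + |a ^ 2| := abs_sub _ _
      _ = b + a ^ 2 := by rw [abs_of_nonneg hb0, abs_of_nonneg (sq_nonneg _)]
      _ ≤ L ^ 2 * ε ^ 3 + L ^ 2 * ε ^ 4 := by linarith
      _ ≤ 2 * L ^ 2 * ε ^ 3 := by linarith
  calc |(B - A ^ 2) / B| = |B - A ^ 2| / B := by
        rw [abs_div, abs_of_pos hBpos]
    _ ≤ (2 * L ^ 2 * ε ^ 3) / (E ^ 2 / 2) := by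
        apply div_le_div₀ (by positivity) hnum (by positivity) hBge
    _ = 4 * L ^ 2 / E ^ 2 * ε ^ 3 := by
        rw [div_div_eq_mul_div, div_mul_eq_mul_div]
        congr 1
        ring
end

section
/- Let u* minimize a c-strongly convex, L-smooth function J : ℝ^m → ℝ, and suppose a deterministic gradient estimator g : ℝ^m → ℝ^m satisfies ⟨∇J(u), g(u)⟩ ≥ μ‖∇J(u)‖² and ‖g(u)‖ ≤ μ_G‖∇J(u)‖ for constants μ_G ≥ μ > 0 and all u. Then for fixed step size 0 < η ≤ μ/(L·μ_G²), the iterates u^{τ+1} = u^τ − η g(u^τ) satisfy J(u^τ) − J(u*) ≤ (1 − η c μ)^τ · (J(u⁰) − J(u*)) for all τ ≥ 0. -/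
set_option maxHeartbeats 1000000

lemma descent_aux {E : Type*} [NormedAddCommGroup E] [InnerProductSpace ℝ E]
    (J : E → ℝ) (gradJ : E → E) (c L : ℝ) (hc : 0 ≤ c) (hL : 0 < L)
    (hstrong : ∀ u u', J u' ≥ J u + (inner ℝ (gradJ u) (u' - u) : ℝ) + c / 2 * ‖u - u'‖ ^ 2)
    (hsmooth : ∀ u u', ‖gradJ u - gradJ u'‖ ≤ L * ‖u - u'‖)
    (u v : E) :
    J v ≤ J u + (inner ℝ (gradJ u) (v - u) : ℝ) + L / 2 * ‖v - u‖ ^ 2 := by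
  set d := v - u with hd
  refine le_of_forall_pos_le_add ?_
  intro ε hε
  obtain ⟨n, hn⟩ := exists_nat_gt (max 0 (L * ‖d‖ ^ 2 / (2 * ε)))
  have hn0 : 0 < (n : ℝ) := lt_of_le_of_lt (le_max_left _ _) hn
  have hnne : (n : ℝ) ≠ 0 := ne_of_gt hn0
  set p : ℕ → E := fun k => u + ((k : ℝ) / n) • d with hp
  have key : ∀ k : ℕ, k ≤ n → J (p k) ≤ J u + ((k : ℝ) / n) * (inner ℝ (gradJ u) d : ℝ)
      + L * ‖d‖ ^ 2 / (n : ℝ) ^ 2 * ((k : ℝ) * ((k : ℝ) + 1) / 2) := by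
    intro k hk
    induction k with
    | zero => simp [hp]
    | succ k ih =>
      have hk' : k ≤ n := le_of_lt (Nat.lt_of_succ_le hk)
      have ih' := ih hk'
      have hdiff : p (k + 1) - p k = ((1 : ℝ) / n) • d := by
        simp only [hp]
        rw [add_sub_add_left_eq_sub, ← sub_smul]
        congr 1
        push_cast
        field_simp
        ring
      have hdiffu : p (k + 1) - u = (((k : ℝ) + 1) / n) • d := by
        simp only [hp, add_sub_cancel_left]
        push_cast
        ring_nf
      have hin : (inner ℝ (gradJ (p (k+1))) (p k - p (k+1)) : ℝ)
          = -(inner ℝ (gradJ (p (k+1))) (p (k+1) - p k) : ℝ) := by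
        rw [← inner_neg_right, neg_sub]
      have hnn : 0 ≤ c / 2 * ‖p (k+1) - p k‖ ^ 2 := by positivity
      have hs := hstrong (p (k+1)) (p k)
      have h1 : J (p (k+1)) ≤ J (p k) + (inner ℝ (gradJ (p (k+1))) (p (k+1) - p k) : ℝ) := by
        rw [hin] at hs
        linarith
      rw [hdiff, real_inner_smul_right] at h1
      have hsplit : (inner ℝ (gradJ (p (k+1))) d : ℝ)
          = (inner ℝ (gradJ u) d : ℝ) + (inner ℝ (gradJ (p (k+1)) - gradJ u) d : ℝ) := by
        rw [inner_sub_left]; ring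
      have h2 : (inner ℝ (gradJ (p (k+1)) - gradJ u) d : ℝ)
          ≤ ‖gradJ (p (k+1)) - gradJ u‖ * ‖d‖ := real_inner_le_norm _ _
      have h4 : ‖p (k+1) - u‖ = ((k : ℝ) + 1) / n * ‖d‖ := by
        rw [hdiffu, norm_smul, Real.norm_eq_abs, abs_of_nonneg (by positivity)]
      have h3 : ‖gradJ (p (k+1)) - gradJ u‖ ≤ L * (((k : ℝ) + 1) / n * ‖d‖) := by
        rw [← h4]; exact hsmooth _ _
      have h5 : ‖gradJ (p (k+1)) - gradJ u‖ * ‖d‖ ≤ L * (((k : ℝ) + 1) / n * ‖d‖) * ‖d‖ :=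
        mul_le_mul_of_nonneg_right h3 (norm_nonneg d)
      have hB : (inner ℝ (gradJ (p (k+1))) d : ℝ)
          ≤ (inner ℝ (gradJ u) d : ℝ) + L * (((k : ℝ) + 1) / n) * ‖d‖ ^ 2 := by
        rw [hsplit]; nlinarith [h2, h5]
      have h6 : ((1:ℝ)/n) * (inner ℝ (gradJ (p (k+1))) d : ℝ)
          ≤ ((1:ℝ)/n) * ((inner ℝ (gradJ u) d : ℝ) + L * (((k : ℝ) + 1) / n) * ‖d‖ ^ 2) :=
        mul_le_mul_of_nonneg_left hB (by positivity)
      push_cast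
      have goal_eq : J u + ((k : ℝ) + 1) / n * (inner ℝ (gradJ u) d : ℝ)
          + L * ‖d‖ ^ 2 / (n : ℝ) ^ 2 * (((k : ℝ) + 1) * ((k : ℝ) + 1 + 1) / 2)
          = (J u + ((k : ℝ) / n) * (inner ℝ (gradJ u) d : ℝ)
            + L * ‖d‖ ^ 2 / (n : ℝ) ^ 2 * ((k : ℝ) * ((k : ℝ) + 1) / 2))
          + ((1:ℝ)/n) * ((inner ℝ (gradJ u) d : ℝ) + L * (((k : ℝ) + 1) / n) * ‖d‖ ^ 2) := by
        field_simp
        ring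
      rw [goal_eq]
      linarith
  have hpn : p n = v := by
    simp only [hp, div_self hnne, one_smul, hd]
    abel
  have hfin := key n le_rfl
  rw [hpn, div_self hnne, one_mul] at hfin
  have hextra : L * ‖d‖ ^ 2 / (n : ℝ) ^ 2 * ((n : ℝ) * ((n : ℝ) + 1) / 2)
      = L / 2 * ‖d‖ ^ 2 + L * ‖d‖ ^ 2 / (2 * n) := by
    field_simp
  rw [hextra] at hfin
  have hsmall : L * ‖d‖ ^ 2 / (2 * n) ≤ ε := by
    have h7 : L * ‖d‖ ^ 2 / (2 * ε) < n := lt_of_le_of_lt (le_max_right _ _) hn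
    rw [div_lt_iff₀ (by positivity)] at h7
    rw [div_le_iff₀ (by positivity)]
    nlinarith
  linarith

theorem biased_gradient_descent_linear_convergence {m : ℕ}
    (J : EuclideanSpace ℝ (Fin m) → ℝ)
    (gradJ g : EuclideanSpace ℝ (Fin m) → EuclideanSpace ℝ (Fin m))
    (c L μ μG η : ℝ) (hc : 0 < c) (hL : 0 < L) (hμ : 0 < μ) (hμG : μ ≤ μG)
    (hstrong : ∀ u u', J u' ≥ J u + (inner ℝ (gradJ u) (u' - u) : ℝ) + c / 2 * ‖u - u'‖ ^ 2)
    (hsmooth : ∀ u u', ‖gradJ u - gradJ u'‖ ≤ L * ‖u - u'‖)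
    (ustar : EuclideanSpace ℝ (Fin m)) (hmin : ∀ u, J ustar ≤ J u)
    (hlb : ∀ u, (inner ℝ (gradJ u) (g u) : ℝ) ≥ μ * ‖gradJ u‖ ^ 2)
    (hub : ∀ u, ‖g u‖ ≤ μG * ‖gradJ u‖)
    (hη : 0 < η) (hη' : η ≤ μ / (L * μG ^ 2))
    (u : ℕ → EuclideanSpace ℝ (Fin m))
    (hiter : ∀ τ : ℕ, u (τ + 1) = u τ - η • g (u τ)) :
    ∀ τ : ℕ, J (u τ) - J ustar ≤ (1 - η * c * μ) ^ τ * (J (u 0) - J ustar) := by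
  rcases Nat.eq_zero_or_pos m with hm | hm
  · intro τ
    haveI : Subsingleton (EuclideanSpace ℝ (Fin m)) := by
      subst hm
      exact ⟨fun a b => by ext i; exact i.elim0⟩
    have h1 : J (u τ) = J ustar := congrArg J (Subsingleton.elim _ _)
    have h2 : J (u 0) = J ustar := congrArg J (Subsingleton.elim _ _)
    rw [h1, h2]
    simp
  · have hμG0 : 0 < μG := lt_of_lt_of_le hμ hμG
    have hLη : η * (L * μG ^ 2) ≤ μ := by
      rw [← le_div_iff₀ (by positivity)]
      exact hη'
    -- c ≤ L
    have hcL : c ≤ L := by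
      set e : EuclideanSpace ℝ (Fin m) := EuclideanSpace.single (⟨0, hm⟩ : Fin m) (1 : ℝ) with he
      have hne : ‖e‖ = 1 := by
        rw [he, EuclideanSpace.norm_single, norm_one]
      have h1 := hstrong 0 e
      have h2 := hstrong e 0
      have e1 : (inner ℝ (gradJ 0) (e - 0) : ℝ) = (inner ℝ (gradJ 0) e : ℝ) := by rw [sub_zero]
      have e2 : (inner ℝ (gradJ e) (0 - e) : ℝ) = -(inner ℝ (gradJ e) e : ℝ) := by
        rw [zero_sub, inner_neg_right]
      have e3 : ‖(0 : EuclideanSpace ℝ (Fin m)) - e‖ = 1 := by rw [zero_sub, norm_neg, hne]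
      have e4 : ‖e - 0‖ = 1 := by rw [sub_zero, hne]
      rw [e1, e3] at h1
      rw [e2, e4] at h2
      have h5 : (inner ℝ (gradJ e - gradJ 0) e : ℝ) ≤ ‖gradJ e - gradJ 0‖ * ‖e‖ :=
        real_inner_le_norm _ _
      have h6 : ‖gradJ e - gradJ 0‖ ≤ L * ‖e - 0‖ := hsmooth _ _
      rw [e4] at h6
      rw [inner_sub_left, hne, mul_one] at h5
      nlinarith
    have hrate : 0 ≤ 1 - η * c * μ := by
      have hμ2 : μ ^ 2 ≤ μG ^ 2 := by nlinarith
      have h7 : c * μ * (η * (L * μG ^ 2)) ≤ c * μ * μ :=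
        mul_le_mul_of_nonneg_left hLη (by positivity)
      have h8 : c * μ ^ 2 ≤ L * μG ^ 2 := by nlinarith
      nlinarith [mul_pos hL (pow_pos hμG0 2), h7, h8]
    -- PL inequality
    have hPL : ∀ x, 2 * c * (J x - J ustar) ≤ ‖gradJ x‖ ^ 2 := by
      intro x
      have hs := hstrong x ustar
      have hCS : |(inner ℝ (gradJ x) (ustar - x) : ℝ)| ≤ ‖gradJ x‖ * ‖ustar - x‖ :=
        abs_real_inner_le_norm _ _
      have hCS' : -(‖gradJ x‖ * ‖ustar - x‖) ≤ (inner ℝ (gradJ x) (ustar - x) : ℝ) := by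
        have := neg_abs_le (inner ℝ (gradJ x) (ustar - x) : ℝ)
        linarith
      have hnorm : ‖x - ustar‖ = ‖ustar - x‖ := norm_sub_rev _ _
      rw [hnorm] at hs
      nlinarith [sq_nonneg (c * ‖ustar - x‖ - ‖gradJ x‖), hs, hCS', hc]
    -- one step decrease
    have hstep : ∀ τ : ℕ, J (u (τ + 1)) - J ustar ≤ (1 - η * c * μ) * (J (u τ) - J ustar) := by
      intro τ
      set x := u τ with hx
      have hdesc := descent_aux J gradJ c L hc.le hL hstrong hsmooth x (u (τ + 1))
      have e1 : u (τ + 1) - x = -(η • g x) := by rw [hiter τ]; abel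
      have e2 : (inner ℝ (gradJ x) (u (τ + 1) - x) : ℝ) = -(η * (inner ℝ (gradJ x) (g x) : ℝ)) := by
        rw [e1, inner_neg_right, real_inner_smul_right]
      have e3 : ‖u (τ + 1) - x‖ ^ 2 = η ^ 2 * ‖g x‖ ^ 2 := by
        rw [e1, norm_neg, norm_smul, Real.norm_eq_abs, abs_of_nonneg hη.le, mul_pow]
      rw [e2, e3] at hdesc
      have hg2 : ‖g x‖ ^ 2 ≤ μG ^ 2 * ‖gradJ x‖ ^ 2 := by
        have := hub x
        nlinarith [norm_nonneg (g x), norm_nonneg (gradJ x)]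
      have hlbx := hlb x
      have hPLx := hPL x
      have h10 : η ^ 2 * ‖g x‖ ^ 2 ≤ η ^ 2 * (μG ^ 2 * ‖gradJ x‖ ^ 2) :=
        mul_le_mul_of_nonneg_left hg2 (by positivity)
      have h12 : L / 2 * (η ^ 2 * ‖g x‖ ^ 2) ≤ L / 2 * (η ^ 2 * (μG ^ 2 * ‖gradJ x‖ ^ 2)) :=
        mul_le_mul_of_nonneg_left h10 (by positivity)
      have h11 : η * (L * μG ^ 2) * (η * ‖gradJ x‖ ^ 2 / 2) ≤ μ * (η * ‖gradJ x‖ ^ 2 / 2) :=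
        mul_le_mul_of_nonneg_right hLη (by positivity)
      have h9 : L / 2 * (η ^ 2 * ‖g x‖ ^ 2) ≤ η * μ / 2 * ‖gradJ x‖ ^ 2 := by
        linarith [h12, h11]
      have h13 : η * (μ * ‖gradJ x‖ ^ 2) ≤ η * (inner ℝ (gradJ x) (g x) : ℝ) :=
        mul_le_mul_of_nonneg_left hlbx hη.le
      have hdec : J (u (τ + 1)) ≤ J x - η * μ / 2 * ‖gradJ x‖ ^ 2 := by
        linarith
      have h14 : η * μ / 2 * (2 * c * (J x - J ustar)) ≤ η * μ / 2 * ‖gradJ x‖ ^ 2 :=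
        mul_le_mul_of_nonneg_left hPLx (by positivity)
      nlinarith [hdec, h14, hPLx]
    intro τ
    induction τ with
    | zero => simp
    | succ τ ih =>
      calc J (u (τ + 1)) - J ustar ≤ (1 - η * c * μ) * (J (u τ) - J ustar) := hstep τ
        _ ≤ (1 - η * c * μ) * ((1 - η * c * μ) ^ τ * (J (u 0) - J ustar)) :=
            mul_le_mul_of_nonneg_left ih hrate
        _ = (1 - η * c * μ) ^ (τ + 1) * (J (u 0) - J ustar) := by ring
end
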